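/- arXiv:math/0512237 — 4 statements merged into one kernel-verified Lean document; each statement's English description precedes it below -/
import Mathlib

section
/- Let σ_1,...,σ_{2g} be the elementary symmetric polynomials in variables ξ_1,...,ξ_{2g}, write σ = σ_{2g} = ξ_1⋯ξ_{2g}, and for 1 ≤ n ≤ 2g−1 define q^g_n(t) = ∏_{1≤i_1<...<i_n≤2g} (1 + ξ_{i_1}⋯ξ_{i_n} t), a polynomial in t of degree b^g_n = C(2g,n) with coefficients in ℤ[ξ_1,...,ξ_{2g}]. Then in ℤ[ξ_1,...,ξ_{2g},σ^{-1}][t,t^{-1}] one has the functional equation q^g_n(1/(σt)) = (σt)^{-b^g_n} · σ^{b^g_n · n/(2g)} · q^g_{2g−n}(t). -/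
open Finset


lemma filter_mem_powersetCard_card {α : Type*} [Fintype α] [DecidableEq α] (n : ℕ) (hn : 1 ≤ n)
    (i : α) :
    ((powersetCard n (univ : Finset α)).filter (fun S => i ∈ S)).card
      = Nat.choose (Fintype.card α - 1) (n - 1) := by
  have h : ((powersetCard n (univ : Finset α)).filter (fun S => i ∈ S)).card
      = (powersetCard (n - 1) ((univ : Finset α).erase i)).card := by
    apply Finset.card_nbij' (fun S => S.erase i) (fun T => insert i T)
    · intro S hS
      simp only [mem_coe, mem_filter, mem_powersetCard_univ] at hS
      rw [mem_coe, mem_powersetCard]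
      constructor
      · intro x hx; simp only [mem_erase] at hx ⊢; exact ⟨hx.1, mem_univ x⟩
      · rw [card_erase_of_mem hS.2, hS.1]
    · intro T hT
      rw [mem_coe, mem_powersetCard] at hT
      simp only [mem_coe, mem_filter, mem_powersetCard_univ]
      have hiT : i ∉ T := fun h => (mem_erase.mp (hT.1 h)).1 rfl
      refine ⟨?_, mem_insert_self i T⟩
      rw [card_insert_of_notMem hiT, hT.2]
      omega
    · intro S hS
      simp only [mem_coe, mem_filter] at hS
      exact insert_erase hS.2
    · intro T hT
      rw [mem_coe, mem_powersetCard] at hT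
      have hiT : i ∉ T := fun h => (mem_erase.mp (hT.1 h)).1 rfl
      exact erase_insert hiT
  rw [h, card_powersetCard, card_erase_of_mem (mem_univ i), Finset.card_univ]

lemma prod_powersetCard_prod {α M : Type*} [Fintype α] [DecidableEq α] [CommMonoid M]
    (n : ℕ) (hn : 1 ≤ n) (f : α → M) :
    ∏ S ∈ powersetCard n (univ : Finset α), ∏ i ∈ S, f i
      = ∏ i, f i ^ Nat.choose (Fintype.card α - 1) (n - 1) := by
  calc ∏ S ∈ powersetCard n (univ : Finset α), ∏ i ∈ S, f i
      = ∏ S ∈ powersetCard n (univ : Finset α), ∏ i : α, (if i ∈ S then f i else 1) := by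
        refine Finset.prod_congr rfl fun S _ => ?_
        rw [Finset.prod_ite_mem, Finset.univ_inter]
    _ = ∏ i : α, ∏ S ∈ powersetCard n (univ : Finset α), (if i ∈ S then f i else 1) :=
        Finset.prod_comm
    _ = ∏ i, f i ^ Nat.choose (Fintype.card α - 1) (n - 1) := by
        refine Finset.prod_congr rfl fun i _ => ?_
        rw [Finset.prod_ite, Finset.prod_const, Finset.prod_const_one, mul_one,
          filter_mem_powersetCard_card n hn i]

/-- With `σ_1,…,σ_{2g}` the elementary symmetric polynomials in `ξ_1,…,ξ_{2g}`,
`σ = σ_{2g} = ξ_1⋯ξ_{2g}`, and `q^g_n(t) = ∏_{i_1<…<i_n} (1 + ξ_{i_1}⋯ξ_{i_n} t)`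
of degree `b^g_n = C(2g,n)`, one has, in the fraction field of `ℤ[ξ_1,…,ξ_{2g}]`
(with `t` invertible, i.e. in the Laurent localization),
`q^g_n(1/(σ t)) = (σ t)^{-b^g_n} σ^{b^g_n n/(2g)} q^g_{2g-n}(t)`,
where `b^g_n · n / (2g) = C(2g-1, n-1)`. -/
theorem qgn_functional_equation (g n : ℕ) (hg : 1 ≤ g) (hn1 : 1 ≤ n) (hn2 : n ≤ 2 * g - 1)
    (K : Type*) [Field K] [Algebra (MvPolynomial (Fin (2 * g)) ℤ) K]
    [IsFractionRing (MvPolynomial (Fin (2 * g)) ℤ) K]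
    (ξ : Fin (2 * g) → K)
    (hξ : ∀ i, ξ i = algebraMap (MvPolynomial (Fin (2 * g)) ℤ) K (MvPolynomial.X i))
    (σ : K) (hσ : σ = ∏ i, ξ i)
    (t : K) (ht : t ≠ 0) :
    ∏ S ∈ powersetCard n (univ : Finset (Fin (2 * g))),
        (1 + (∏ i ∈ S, ξ i) * (σ * t)⁻¹)
      = ((σ * t)⁻¹) ^ (Nat.choose (2 * g) n) * σ ^ (Nat.choose (2 * g - 1) (n - 1)) *
          ∏ S ∈ powersetCard (2 * g - n) (univ : Finset (Fin (2 * g))),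
            (1 + (∏ i ∈ S, ξ i) * t) := by
  have hξne : ∀ i, ξ i ≠ 0 := by
    intro i
    rw [hξ i]
    exact (map_ne_zero_iff _ (IsFractionRing.injective (MvPolynomial (Fin (2 * g)) ℤ) K)).mpr
      (MvPolynomial.X_ne_zero i)
  have hσne : σ ≠ 0 := by
    rw [hσ]; exact Finset.prod_ne_zero_iff.mpr fun i _ => hξne i
  have hst : σ * t ≠ 0 := mul_ne_zero hσne ht
  have key : ∀ S ∈ powersetCard n (univ : Finset (Fin (2 * g))),
      1 + (∏ i ∈ S, ξ i) * (σ * t)⁻¹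
        = (∏ i ∈ S, ξ i) * (σ * t)⁻¹ * (1 + (∏ i ∈ Sᶜ, ξ i) * t) := by
    intro S _
    have hc : (∏ i ∈ S, ξ i) * (∏ i ∈ Sᶜ, ξ i) = σ := by
      rw [hσ, Finset.prod_mul_prod_compl]
    field_simp
    linear_combination -t * hc
  rw [Finset.prod_congr rfl key, Finset.prod_mul_distrib, Finset.prod_mul_distrib,
    Finset.prod_const]
  have hcard : (powersetCard n (univ : Finset (Fin (2 * g)))).card = Nat.choose (2 * g) n := by
    rw [card_powersetCard, Finset.card_univ, Fintype.card_fin]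
  have hp1 : ∏ S ∈ powersetCard n (univ : Finset (Fin (2 * g))), ∏ i ∈ S, ξ i
      = σ ^ Nat.choose (2 * g - 1) (n - 1) := by
    rw [prod_powersetCard_prod n hn1 ξ, Fintype.card_fin, hσ, ← Finset.prod_pow]
  have hp2 : ∏ S ∈ powersetCard n (univ : Finset (Fin (2 * g))), (1 + (∏ i ∈ Sᶜ, ξ i) * t)
      = ∏ S ∈ powersetCard (2 * g - n) (univ : Finset (Fin (2 * g))),
          (1 + (∏ i ∈ S, ξ i) * t) := by
    apply Finset.prod_nbij' (fun S => Sᶜ) (fun S => Sᶜ)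
    · intro S hS
      rw [mem_powersetCard_univ] at hS ⊢
      rw [Finset.card_compl, Fintype.card_fin, hS]
    · intro S hS
      rw [mem_powersetCard_univ] at hS ⊢
      rw [Finset.card_compl, Fintype.card_fin, hS]
      omega
    · intro S _; exact compl_compl S
    · intro S _; exact compl_compl S
    · intro S _; rfl
  rw [hp1, hp2, hcard]
  ring
end

section
/- For representations V of S_m and W of S_n, with S_m ⋉ S_n^m ≤ S_{mn} acting on {1,...,mn} via m blocks of size n: Sign(S_{mn}) ⊗ Ind^{S_{mn}}_{S_m⋉S_n^m}(V ⊗ W^{⊗m}) is isomorphic to Ind^{S_{mn}}_{S_m⋉S_n^m}(V' ⊗ (W')^{⊗m}) if n is odd, and to Ind^{S_{mn}}_{S_m⋉S_n^m}(V ⊗ (W')^{⊗m}) if n is even, where V' = Sign(S_m) ⊗ V and W' = Sign(S_n) ⊗ W. -/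
open TensorProduct

section Defs

variable {k G H V W : Type*} [CommRing k] [Group G] [Group H]
  [AddCommGroup V] [Module k V] [AddCommGroup W] [Module k W]

/-- The underlying space of the representation of `G` induced along `φ : H →* G`:
functions `f : G → V` with `f (φ h * g) = ρ h (f g)`. -/
def indCarrier (φ : H →* G) (ρ : Representation k H V) : Submodule k (G → V) where
  carrier := {f | ∀ (h : H) (g : G), f (φ h * g) = ρ h (f g)}
  add_mem' := by intro a b ha hb h g; simp [ha h g, hb h g]
  zero_mem' := by intro h g; simp
  smul_mem' := by intro c a ha h g; simp [ha h g]

/-- The underlying space of the induced representation (type synonym). -/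
def IndSpace (φ : H →* G) (ρ : Representation k H V) : Type _ := indCarrier φ ρ

noncomputable instance (φ : H →* G) (ρ : Representation k H V) :
    AddCommGroup (IndSpace φ ρ) :=
  inferInstanceAs (AddCommGroup (indCarrier φ ρ))

noncomputable instance (φ : H →* G) (ρ : Representation k H V) :
    Module k (IndSpace φ ρ) :=
  inferInstanceAs (Module k (indCarrier φ ρ))

/-- The induced representation `Ind_H^G V`, with `G` acting by right translation. -/
def indRep (φ : H →* G) (ρ : Representation k H V) : Representation k G (IndSpace φ ρ) where
  toFun g :=
    { toFun := fun f => (⟨fun x => ((show indCarrier φ ρ from f) : G → V) (x * g), by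
        intro h x
        simpa [mul_assoc] using (show indCarrier φ ρ from f).2 h (x * g)⟩ : indCarrier φ ρ)
      map_add' := by intro a b; rfl
      map_smul' := by intro c a; rfl }
  map_one' := by apply LinearMap.ext; intro f; apply Subtype.ext; funext x; simp <;> rfl
  map_mul' g₁ g₂ := by
    apply LinearMap.ext; intro f; apply Subtype.ext; funext x
    simp [mul_assoc] <;>
      exact congrArg (fun y => ((show indCarrier φ ρ from f) : G → V) y) (mul_assoc x g₁ g₂).symm

/-- An equivariant isomorphism of representations. -/
def RepIso (ρ : Representation k G V) (τ : Representation k G W) : Prop :=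
  ∃ e : V ≃ₗ[k] W, ∀ (g : G) (v : V), e (ρ g v) = τ g (e v)

end Defs

/-- Twisting a representation of a symmetric group by the sign character. -/
def signTwist {k α V : Type*} [CommRing k] [Fintype α] [DecidableEq α] [AddCommGroup V]
    [Module k V] (ρ : Representation k (Equiv.Perm α) V) :
    Representation k (Equiv.Perm α) V where
  toFun g := ((Equiv.Perm.sign g : ℤ) : k) • ρ g
  map_one' := by simp
  map_mul' g h := by
    ext v
    simp only [Equiv.Perm.sign_mul, Module.End.mul_apply, LinearMap.smul_apply, map_smul,
      map_mul, smul_smul]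
    congr 1
    push_cast
    ring

/-- The action of `S_m` on `S_n^m` permuting the coordinates. -/
def permAut (m n : ℕ) : Equiv.Perm (Fin m) →* MulAut (Fin m → Equiv.Perm (Fin n)) where
  toFun σ :=
    { toFun := fun f => f ∘ σ.symm
      invFun := fun f => f ∘ σ
      left_inv := fun f => by ext i j; simp
      right_inv := fun f => by ext i j; simp
      map_mul' := fun f g => rfl }
  map_one' := by ext f i j <;> simp [Equiv.Perm.one_symm]
  map_mul' σ τ := by ext f i j <;> simp [← Equiv.Perm.inv_def, mul_inv_rev]

/-- The wreath product `S_n ≀ S_m = S_m ⋉ S_n^m` mapped into the permutations of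
`{1,…,mn} = Fin m × Fin n` (blocks of size `n` indexed by `Fin m`):
`(f, σ)` sends `(i, j)` to `(σ i, f (σ i) j)`. -/
def wreathHom (m n : ℕ) :
    (Fin m → Equiv.Perm (Fin n)) ⋊[permAut m n] Equiv.Perm (Fin m) →*
      Equiv.Perm (Fin m × Fin n) where
  toFun x := (Equiv.prodCongr x.right (Equiv.refl (Fin n))).trans
      (Equiv.prodShear (Equiv.refl (Fin m)) x.left)
  map_one' := by ext ⟨i, j⟩ <;> simp
  map_mul' a b := by
    ext ⟨i, j⟩ <;>
      simp [SemidirectProduct.mul_def, SemidirectProduct.mul_left, SemidirectProduct.mul_right, permAut,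
        Equiv.Perm.mul_apply] <;>
      first
        | rfl
        | (show (((a.left * (permAut m n a.right) b.left) ((a.right * b.right) i)) j : ℕ) = _
           simp [permAut, Equiv.Perm.mul_apply])

section Aux

lemma wreathHom_eq (m n : ℕ) (f : Fin m → Equiv.Perm (Fin n)) (σ : Equiv.Perm (Fin m)) :
    wreathHom m n ⟨f, σ⟩ =
      Equiv.prodCongrRight f * Equiv.prodCongrLeft (fun _ : Fin n => σ) := by
  ext ⟨i, j⟩ <;>
    simp [wreathHom, Equiv.prodCongrRight, Equiv.prodCongrLeft, Equiv.Perm.mul_apply]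

lemma sign_wreathHom (m n : ℕ) (f : Fin m → Equiv.Perm (Fin n)) (σ : Equiv.Perm (Fin m)) :
    Equiv.Perm.sign (wreathHom m n ⟨f, σ⟩)
      = Equiv.Perm.sign σ ^ n * ∏ i, Equiv.Perm.sign (f i) := by
  rw [wreathHom_eq, map_mul, Equiv.Perm.sign_prodCongrRight, Equiv.Perm.sign_prodCongrLeft]
  rw [Finset.prod_const, Finset.card_univ, Fintype.card_fin, mul_comm]

/-- Twisting an induced representation by the sign character is the same as inducing the
representation twisted by the restriction of the sign character. -/
lemma repIso_signTwist_indRep {k α H V : Type*} [CommRing k] [Fintype α] [DecidableEq α]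
    [Group H] [AddCommGroup V] [Module k V]
    (φ : H →* Equiv.Perm α) (ρ ρ' : Representation k H V)
    (hρ : ∀ x : H, ρ' x = ((Equiv.Perm.sign (φ x) : ℤ) : k) • ρ x) :
    RepIso (signTwist (indRep φ ρ)) (indRep φ ρ') := by
  classical
  set ε : Equiv.Perm α → k := fun g => ((Equiv.Perm.sign g : ℤ) : k) with hε
  have εmul : ∀ g₁ g₂, ε (g₁ * g₂) = ε g₁ * ε g₂ := by
    intro g₁ g₂
    simp only [hε, map_mul, Units.val_mul, Int.cast_mul]
  have εsq : ∀ g, ε g * ε g = 1 := by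
    intro g
    rcases Int.units_eq_one_or (Equiv.Perm.sign g) with h | h <;> simp [hε, h]
  have mem₁ : ∀ F : IndSpace φ ρ,
      (fun g => ε g • (show indCarrier φ ρ from F).1 g) ∈ indCarrier φ ρ' := by
    intro F h g
    have h2 := (show indCarrier φ ρ from F).2 h g
    show ε (φ h * g) • (show indCarrier φ ρ from F).1 (φ h * g)
        = ρ' h (ε g • (show indCarrier φ ρ from F).1 g)
    rw [h2, hρ, εmul, LinearMap.smul_apply, map_smul, smul_smul]
  have mem₂ : ∀ F : IndSpace φ ρ',
      (fun g => ε g • (show indCarrier φ ρ' from F).1 g) ∈ indCarrier φ ρ := by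
    intro F h g
    have h2 := (show indCarrier φ ρ' from F).2 h g
    show ε (φ h * g) • (show indCarrier φ ρ' from F).1 (φ h * g)
        = ρ h (ε g • (show indCarrier φ ρ' from F).1 g)
    rw [h2, hρ, εmul, LinearMap.smul_apply, map_smul, smul_smul]
    congr 1
    show ε (φ h) * ε g * ε (φ h) = ε g
    rw [mul_right_comm, εsq, one_mul]
  refine ⟨{ toFun := fun F => show IndSpace φ ρ' from ⟨_, mem₁ F⟩
            invFun := fun F => show IndSpace φ ρ from ⟨_, mem₂ F⟩
            map_add' := by
              intro a b; apply Subtype.ext; funext g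
              exact smul_add (ε g) ((show indCarrier φ ρ from a).1 g)
                ((show indCarrier φ ρ from b).1 g)
            map_smul' := by
              intro c a; apply Subtype.ext; funext g
              exact smul_comm (ε g) c ((show indCarrier φ ρ from a).1 g)
            left_inv := by
              intro F; apply Subtype.ext; funext g
              show ε g • ε g • (show indCarrier φ ρ from F).1 g
                  = (show indCarrier φ ρ from F).1 g
              rw [smul_smul, εsq, one_smul]
            right_inv := by
              intro F; apply Subtype.ext; funext g
              show ε g • ε g • (show indCarrier φ ρ' from F).1 g
                  = (show indCarrier φ ρ' from F).1 g
              rw [smul_smul, εsq, one_smul] }, ?_⟩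
  intro g F
  apply Subtype.ext
  funext x
  show ε x • (ε g • (show indCarrier φ ρ from F).1 (x * g))
      = ε (x * g) • (show indCarrier φ ρ from F).1 (x * g)
  rw [εmul, smul_smul]

end Aux

/-- For representations `V` of `S_m` and `W` of `S_n`, with the wreath product
`Γ = S_m ⋉ S_n^m ≤ S_{mn}` acting via `m` blocks of size `n` (`wreathHom`), and `τ` the
representation of `Γ` on `V ⊗ W^{⊗m}` (with `S_n^m` acting factorwise and `S_m` permuting the
factors and acting on `V`), the representation `Sign(S_{mn}) ⊗ Ind^{S_{mn}}_Γ (V ⊗ W^{⊗m})` is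
isomorphic to `Ind^{S_{mn}}_Γ (V' ⊗ (W')^{⊗m})` if `n` is odd, and to
`Ind^{S_{mn}}_Γ (V ⊗ (W')^{⊗m})` if `n` is even, where `V' = Sign(S_m) ⊗ V` and
`W' = Sign(S_n) ⊗ W`. -/
theorem sign_twist_of_induced_from_wreath_product
    (κ : Type*) [Field κ] [CharZero κ] (m n : ℕ)
    (V W : Type*) [AddCommGroup V] [Module κ V] [AddCommGroup W] [Module κ W]
    [FiniteDimensional κ V] [FiniteDimensional κ W]
    (ρV : Representation κ (Equiv.Perm (Fin m)) V)
    (ρW : Representation κ (Equiv.Perm (Fin n)) W)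
    (τ τ' τ'' : Representation κ ((Fin m → Equiv.Perm (Fin n)) ⋊[permAut m n] Equiv.Perm (Fin m))
      (V ⊗[κ] (⨂[κ] _i : Fin m, W)))
    (hτ : ∀ (f : Fin m → Equiv.Perm (Fin n)) (σ : Equiv.Perm (Fin m)) (v : V) (w : Fin m → W),
      τ ⟨f, σ⟩ (v ⊗ₜ[κ] PiTensorProduct.tprod κ w)
        = ρV σ v ⊗ₜ[κ] PiTensorProduct.tprod κ (fun i => ρW (f i) (w (σ.symm i))))
    (hτ' : ∀ (f : Fin m → Equiv.Perm (Fin n)) (σ : Equiv.Perm (Fin m)) (v : V) (w : Fin m → W),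
      τ' ⟨f, σ⟩ (v ⊗ₜ[κ] PiTensorProduct.tprod κ w)
        = (((Equiv.Perm.sign σ : ℤ) : κ) * ∏ i, ((Equiv.Perm.sign (f i) : ℤ) : κ)) •
            (ρV σ v ⊗ₜ[κ] PiTensorProduct.tprod κ (fun i => ρW (f i) (w (σ.symm i)))))
    (hτ'' : ∀ (f : Fin m → Equiv.Perm (Fin n)) (σ : Equiv.Perm (Fin m)) (v : V) (w : Fin m → W),
      τ'' ⟨f, σ⟩ (v ⊗ₜ[κ] PiTensorProduct.tprod κ w)
        = (∏ i, ((Equiv.Perm.sign (f i) : ℤ) : κ)) •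
            (ρV σ v ⊗ₜ[κ] PiTensorProduct.tprod κ (fun i => ρW (f i) (w (σ.symm i))))) :
    (Odd n → RepIso (signTwist (indRep (wreathHom m n) τ)) (indRep (wreathHom m n) τ')) ∧
    (Even n → RepIso (signTwist (indRep (wreathHom m n) τ)) (indRep (wreathHom m n) τ'')) := by
  classical
  have key : ∀ (ϑ : Representation κ
        ((Fin m → Equiv.Perm (Fin n)) ⋊[permAut m n] Equiv.Perm (Fin m))
        (V ⊗[κ] (⨂[κ] _i : Fin m, W)))
      (c : (Fin m → Equiv.Perm (Fin n)) → Equiv.Perm (Fin m) → κ),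
      (∀ (f : Fin m → Equiv.Perm (Fin n)) (σ : Equiv.Perm (Fin m)) (v : V) (w : Fin m → W),
        ϑ ⟨f, σ⟩ (v ⊗ₜ[κ] PiTensorProduct.tprod κ w)
          = c f σ • (ρV σ v ⊗ₜ[κ] PiTensorProduct.tprod κ (fun i => ρW (f i) (w (σ.symm i))))) →
      ∀ (f : Fin m → Equiv.Perm (Fin n)) (σ : Equiv.Perm (Fin m)),
        ϑ ⟨f, σ⟩ = c f σ • τ ⟨f, σ⟩ := by
    intro ϑ c hc f σ
    apply TensorProduct.ext'
    intro v y
    induction y using PiTensorProduct.induction_on with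
    | smul_tprod r w =>
        rw [TensorProduct.tmul_smul, map_smul, map_smul, hc, LinearMap.smul_apply, hτ]
    | add x y hx hy =>
        rw [TensorProduct.tmul_add, map_add, map_add, hx, hy]
  constructor
  · intro hn
    apply repIso_signTwist_indRep
    rintro ⟨f, σ⟩
    have hpow : Equiv.Perm.sign σ ^ n = Equiv.Perm.sign σ := by
      rcases Int.units_eq_one_or (Equiv.Perm.sign σ) with h | h <;> simp [h, hn.neg_one_pow]
    have hsign : ((Equiv.Perm.sign
          (wreathHom m n ⟨f, σ⟩) : ℤ) : κ)
        = ((Equiv.Perm.sign σ : ℤ) : κ) * ∏ i, ((Equiv.Perm.sign (f i) : ℤ) : κ) := by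
      rw [sign_wreathHom, hpow]
      push_cast
      rfl
    rw [hsign]
    exact key τ' _ hτ' f σ
  · intro hn
    apply repIso_signTwist_indRep
    rintro ⟨f, σ⟩
    have hpow : Equiv.Perm.sign σ ^ n = 1 := by
      rcases Int.units_eq_one_or (Equiv.Perm.sign σ) with h | h <;> simp [h, hn.neg_one_pow]
    have hsign : ((Equiv.Perm.sign
          (wreathHom m n ⟨f, σ⟩) : ℤ) : κ)
        = ∏ i, ((Equiv.Perm.sign (f i) : ℤ) : κ) := by
      rw [sign_wreathHom, hpow, one_mul]
      push_cast
      rfl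
    rw [hsign]
    exact key τ'' _ hτ'' f σ
end

section
/- Let A be a special λ-ring with operations λ^r, and let σ^r be the opposite operations. Then for all x, y ∈ A and n ≥ 0: λ^n(xy) = P_n(σ^1(x),...,σ^n(x), σ^1(y),...,σ^n(y)), where P_n is the universal polynomial defined as the coefficient of t^n in ∏_{1≤i,j≤N}(1+ξ_i x_j t) expressed in the elementary symmetric polynomials of the ξ's and of the x's (N ≥ n). -/
open Finset MvPolynomial

lemma lam_zero_aux (A : Type*) [CommRing A] (lam : ℕ → A → A)
    (hl0 : ∀ a : A, lam 0 a = 1)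
    (hladd : ∀ (r : ℕ) (a b : A),
      lam r (a + b) = ∑ p ∈ Finset.HasAntidiagonal.antidiagonal r, lam p.1 a * lam p.2 b) :
    ∀ r, lam r (0 : A) = if r = 0 then 1 else 0 := by
  set F : PowerSeries A := PowerSeries.mk fun r => lam r (0 : A) with hFdef
  have hF : F * F = F := by
    ext n
    rw [PowerSeries.coeff_mul]
    simp only [hFdef, PowerSeries.coeff_mk]
    rw [← hladd n 0 0, add_zero]
  have hU : IsUnit F := by
    rw [PowerSeries.isUnit_iff_constantCoeff]
    simp [hFdef, hl0]
  have hF1 : F = 1 := by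
    have h2 : F * F = F * 1 := by rw [hF, mul_one]
    exact hU.mul_left_cancel h2
  intro r
  have := congrArg (PowerSeries.coeff r) hF1
  simpa [hFdef, PowerSeries.coeff_one] using this

lemma sig_eq_aux (A : Type*) [CommRing A] (lam sig : ℕ → A → A)
    (hl0 : ∀ a : A, lam 0 a = 1)
    (hladd : ∀ (r : ℕ) (a b : A),
      lam r (a + b) = ∑ p ∈ Finset.HasAntidiagonal.antidiagonal r, lam p.1 a * lam p.2 b)
    (hsig : ∀ a : A,
      (PowerSeries.mk fun r => sig r a) * (PowerSeries.mk fun r => (-1 : A) ^ r * lam r a) = 1) :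
    ∀ (k : ℕ) (x : A), sig k x = (-1 : A) ^ k * lam k (-x) := by
  intro k x
  have hz := lam_zero_aux A lam hl0 hladd
  set L : A → PowerSeries A := fun a => PowerSeries.mk fun r => (-1 : A) ^ r * lam r a with hLdef
  have hLx : L x * L (-x) = 1 := by
    ext n
    rw [PowerSeries.coeff_mul]
    simp only [hLdef, PowerSeries.coeff_mk]
    have hterm : ∀ p ∈ Finset.HasAntidiagonal.antidiagonal n,
        ((-1 : A) ^ p.1 * lam p.1 x) * ((-1 : A) ^ p.2 * lam p.2 (-x))
          = (-1 : A) ^ n * (lam p.1 x * lam p.2 (-x)) := by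
      intro p hp
      rw [Finset.HasAntidiagonal.mem_antidiagonal] at hp
      rw [← hp, pow_add]; ring
    rw [Finset.sum_congr rfl hterm, ← Finset.mul_sum, ← hladd n x (-x), add_neg_cancel, hz]
    rcases Nat.eq_zero_or_pos n with h | h
    · simp [h]
    · simp [Nat.pos_iff_ne_zero.mp h, PowerSeries.coeff_one]
  have hs : (PowerSeries.mk fun r => sig r x) = L (-x) := by
    calc (PowerSeries.mk fun r => sig r x)
        = (PowerSeries.mk fun r => sig r x) * (L x * L (-x)) := by rw [hLx, mul_one]
      _ = ((PowerSeries.mk fun r => sig r x) * L x) * L (-x) := by ring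
      _ = 1 * L (-x) := by rw [hsig x]
      _ = L (-x) := one_mul _
  have := congrArg (PowerSeries.coeff k) hs
  simpa [hLdef] using this


lemma esymm_aeval_injective (R : Type*) [CommRing R] (n : ℕ) :
    Function.Injective (aeval (fun i : Fin n => esymm (Fin n) R ((i : ℕ) + 1)) :
      MvPolynomial (Fin n) R →ₐ[R] MvPolynomial (Fin n) R) := by
  intro p q h
  have hinj := esymmAlgHom_injective (σ := Fin n) (R := R) (n := n)
    (by simp [Fintype.card_fin])
  apply hinj
  apply Subtype.ext
  rw [esymmAlgHom_apply, esymmAlgHom_apply]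
  exact h

lemma pair_esymm_injective (n : ℕ) :
    Function.Injective (aeval (Sum.elim
        (fun i : Fin n => rename Sum.inl (esymm (Fin n) ℤ ((i : ℕ) + 1)))
        (fun j : Fin n => rename Sum.inr (esymm (Fin n) ℤ ((j : ℕ) + 1)))) :
      MvPolynomial (Fin n ⊕ Fin n) ℤ →ₐ[ℤ] MvPolynomial (Fin n ⊕ Fin n) ℤ) := by
  set R' := MvPolynomial (Fin n) ℤ with hR'
  set e := sumAlgEquiv ℤ (Fin n) (Fin n) with he
  set ψ : R' →+* R' :=
    (aeval (fun i : Fin n => esymm (Fin n) ℤ ((i : ℕ) + 1)) : R' →ₐ[ℤ] R').toRingHom with hψ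
  set θ : MvPolynomial (Fin n) R' →+* MvPolynomial (Fin n) R' :=
    (aeval (fun i : Fin n => esymm (Fin n) R' ((i : ℕ) + 1)) :
      MvPolynomial (Fin n) R' →ₐ[R'] MvPolynomial (Fin n) R').toRingHom with hθ
  set Φ : MvPolynomial (Fin n) R' →+* MvPolynomial (Fin n) R' :=
    (MvPolynomial.map ψ).comp θ with hΦ
  have hΦinj : Function.Injective Φ := by
    refine (MvPolynomial.map_injective ψ (esymm_aeval_injective ℤ n)).comp ?_
    exact esymm_aeval_injective R' n
  have hcomm : (e.toAlgHom.toRingHom).comp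
      (aeval (Sum.elim
        (fun i : Fin n => rename Sum.inl (esymm (Fin n) ℤ ((i : ℕ) + 1)))
        (fun j : Fin n => rename Sum.inr (esymm (Fin n) ℤ ((j : ℕ) + 1)))) :
        MvPolynomial (Fin n ⊕ Fin n) ℤ →ₐ[ℤ] _).toRingHom
      = Φ.comp e.toAlgHom.toRingHom := by
    apply MvPolynomial.ringHom_ext
    · intro r
      simp only [RingHom.comp_apply, AlgHom.toRingHom_eq_coe, RingHom.coe_coe, AlgHom.coe_coe]
      rw [show (C r : MvPolynomial (Fin n ⊕ Fin n) ℤ) = (r : MvPolynomial (Fin n ⊕ Fin n) ℤ) from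
        eq_intCast (C : ℤ →+* _) r]
      simp [map_intCast]
    · rintro (i | j)
      · simp only [RingHom.comp_apply, AlgHom.toRingHom_eq_coe, RingHom.coe_coe, AlgHom.coe_coe,
          aeval_X, Sum.elim_inl]
      -- LHS : e (rename Sum.inl (esymm (Fin n) ℤ (i+1)))
        have h1 : e (rename Sum.inl (esymm (Fin n) ℤ ((i : ℕ) + 1)))
            = esymm (Fin n) R' ((i : ℕ) + 1) := by
          have := congrArg (fun f => f (esymm (Fin n) ℤ ((i : ℕ) + 1)))
            (congrArg DFunLike.coe (sumAlgEquiv_comp_rename_inl (R := ℤ) (S₁ := Fin n)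
              (S₂ := Fin n)))
          simp only [AlgHom.coe_comp, Function.comp_apply, AlgEquiv.toAlgHom_eq_coe,
            AlgHom.coe_coe, AlgEquiv.coe_algHom] at this
          rw [← he] at this
          rw [this]
          simp [mapAlgHom_apply, map_esymm]
          rfl
        have h2 : e (X (Sum.inl i) : MvPolynomial (Fin n ⊕ Fin n) ℤ) = X i := by
          rw [← rename_X (Sum.inl : Fin n → Fin n ⊕ Fin n) i]
          have := congrArg (fun f => f (X i : MvPolynomial (Fin n) ℤ))
            (congrArg DFunLike.coe (sumAlgEquiv_comp_rename_inl (R := ℤ) (S₁ := Fin n)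
              (S₂ := Fin n)))
          simp only [AlgHom.coe_comp, Function.comp_apply, AlgEquiv.toAlgHom_eq_coe,
            AlgHom.coe_coe, AlgEquiv.coe_algHom] at this
          rw [← he] at this
          rw [this]
          simp [mapAlgHom_apply]
        show e _ = Φ (e (X (Sum.inl i)))
        rw [h1, h2, hΦ]
        simp only [RingHom.comp_apply, hθ, AlgHom.toRingHom_eq_coe, RingHom.coe_coe, aeval_X]
        rw [map_esymm]
      · simp only [RingHom.comp_apply, AlgHom.toRingHom_eq_coe, RingHom.coe_coe, AlgHom.coe_coe,
          aeval_X, Sum.elim_inr]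
        have h1 : e (rename Sum.inr (esymm (Fin n) ℤ ((j : ℕ) + 1)))
            = C (esymm (Fin n) ℤ ((j : ℕ) + 1)) := by
          have := congrArg (fun f => f (esymm (Fin n) ℤ ((j : ℕ) + 1)))
            (congrArg DFunLike.coe (sumAlgEquiv_comp_rename_inr (R := ℤ) (S₁ := Fin n)
              (S₂ := Fin n)))
          simp only [AlgHom.coe_comp, Function.comp_apply, AlgEquiv.toAlgHom_eq_coe,
            AlgHom.coe_coe, AlgEquiv.coe_algHom] at this
          rw [← he] at this
          rw [this]
          rfl
        have h2 : e (X (Sum.inr j) : MvPolynomial (Fin n ⊕ Fin n) ℤ) = C (X j) := by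
          rw [← rename_X (Sum.inr : Fin n → Fin n ⊕ Fin n) j]
          have := congrArg (fun f => f (X j : MvPolynomial (Fin n) ℤ))
            (congrArg DFunLike.coe (sumAlgEquiv_comp_rename_inr (R := ℤ) (S₁ := Fin n)
              (S₂ := Fin n)))
          simp only [AlgHom.coe_comp, Function.comp_apply, AlgEquiv.toAlgHom_eq_coe,
            AlgHom.coe_coe, AlgEquiv.coe_algHom] at this
          rw [← he] at this
          rw [this]
          rfl
        show e _ = Φ (e (X (Sum.inr j)))
        rw [h1, h2, hΦ]
        simp only [RingHom.comp_apply, hθ, AlgHom.toRingHom_eq_coe, RingHom.coe_coe, aeval_C]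
        rw [show (algebraMap R' (MvPolynomial (Fin n) R')) (X j) = C (X j) from rfl]
        rw [MvPolynomial.map_C, hψ]
        congr 1
        exact (aeval_X (R := ℤ) (fun i : Fin n => esymm (Fin n) ℤ ((i : ℕ) + 1)) j).symm
  intro p q h
  have h1 := RingHom.congr_fun hcomm p
  have h2 := RingHom.congr_fun hcomm q
  simp only [RingHom.comp_apply, AlgHom.toRingHom_eq_coe, RingHom.coe_coe, AlgHom.coe_coe] at h1 h2
  have h3 := h1.symm.trans ((congrArg _ h).trans h2)
  exact e.injective (hΦinj h3)


lemma esymm_eval (B : Type*) [CommRing B] (N m : ℕ) (v : Fin N → B) :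
    aeval v (esymm (Fin N) ℤ m) = ∑ t ∈ powersetCard m univ, ∏ i ∈ t, v i := by
  simp [esymm]

lemma esymm_neg_eval (B : Type*) [CommRing B] (N m : ℕ) (v : Fin N → B) :
    aeval (fun k => - v k) (esymm (Fin N) ℤ m)
      = (-1 : B) ^ m * aeval v (esymm (Fin N) ℤ m) := by
  rw [esymm_eval, esymm_eval, Finset.mul_sum]
  apply Finset.sum_congr rfl
  intro t ht
  rw [Finset.mem_powersetCard_univ] at ht
  calc (∏ i ∈ t, - v i) = ∏ i ∈ t, ((-1 : B) * v i) := by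
        apply Finset.prod_congr rfl; intro i _; ring
    _ = (-1 : B) ^ t.card * ∏ i ∈ t, v i := by
        rw [Finset.prod_mul_distrib, Finset.prod_const]
    _ = (-1 : B) ^ m * ∏ i ∈ t, v i := by rw [ht]

lemma rename_as_aeval {σ τ : Type*} (f : σ → τ) (p : MvPolynomial σ ℤ) :
    rename f p = aeval (fun s => X (f s)) p := by
  rw [show rename f = aeval (fun s => (X (f s) : MvPolynomial τ ℤ)) from
    MvPolynomial.algHom_ext (fun s => by simp)]

set_option maxHeartbeats 1000000 in
lemma P_sign (n : ℕ) (p : MvPolynomial (Fin n ⊕ Fin n) ℤ)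
    (hp : aeval (Sum.elim
        (fun i : Fin n => rename Sum.inl (esymm (Fin n) ℤ ((i : ℕ) + 1)))
        (fun j : Fin n => rename Sum.inr (esymm (Fin n) ℤ ((j : ℕ) + 1)))) p
      = (∏ i : Fin n, ∏ j : Fin n,
          (Polynomial.C ((X (Sum.inl i) * X (Sum.inr j) : MvPolynomial (Fin n ⊕ Fin n) ℤ)) *
            Polynomial.X + 1)).coeff n) :
    aeval (Sum.elim
      (fun i : Fin n => (-1 : MvPolynomial (Fin n ⊕ Fin n) ℤ) ^ ((i : ℕ) + 1) * X (Sum.inl i))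
      (fun j : Fin n => (-1 : MvPolynomial (Fin n ⊕ Fin n) ℤ) ^ ((j : ℕ) + 1) * X (Sum.inr j))) p
      = p := by
  apply pair_esymm_injective n
  set F : Fin n ⊕ Fin n → MvPolynomial (Fin n ⊕ Fin n) ℤ := Sum.elim
      (fun i : Fin n => rename Sum.inl (esymm (Fin n) ℤ ((i : ℕ) + 1)))
      (fun j : Fin n => rename Sum.inr (esymm (Fin n) ℤ ((j : ℕ) + 1))) with hFdef
  set g : Fin n ⊕ Fin n → MvPolynomial (Fin n ⊕ Fin n) ℤ := Sum.elim
      (fun i : Fin n => (-1 : MvPolynomial (Fin n ⊕ Fin n) ℤ) ^ ((i : ℕ) + 1) * X (Sum.inl i))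
      (fun j : Fin n => (-1 : MvPolynomial (Fin n ⊕ Fin n) ℤ) ^ ((j : ℕ) + 1) * X (Sum.inr j))
      with hgdef
  set S : MvPolynomial (Fin n ⊕ Fin n) ℤ →ₐ[ℤ] MvPolynomial (Fin n ⊕ Fin n) ℤ :=
    aeval (fun s => - X s) with hSdef
  have step1 : aeval F (aeval g p) = aeval (fun s => aeval F (g s)) p :=
    AlgHom.congr_fun (comp_aeval (f := g)
      (φ := (aeval F : MvPolynomial (Fin n ⊕ Fin n) ℤ →ₐ[ℤ] MvPolynomial (Fin n ⊕ Fin n) ℤ))) p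
  have hSF : ∀ s, S (F s) = aeval F (g s) := by
    rintro (i | j)
    · simp only [hgdef, Sum.elim_inl, map_mul, map_pow, map_neg, map_one, aeval_X, hFdef, hSdef]
      rw [rename_as_aeval]
      have hc : (aeval (fun s => - X s) : MvPolynomial (Fin n ⊕ Fin n) ℤ →ₐ[ℤ] _)
            ((aeval (fun s : Fin n => (X (Sum.inl s) : MvPolynomial (Fin n ⊕ Fin n) ℤ)))
              (esymm (Fin n) ℤ ((i : ℕ) + 1)))
          = aeval (fun s : Fin n =>
              - (X (Sum.inl s) : MvPolynomial (Fin n ⊕ Fin n) ℤ)) (esymm (Fin n) ℤ ((i : ℕ) + 1)) := by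
        have := AlgHom.congr_fun (comp_aeval
          (f := fun s : Fin n => (X (Sum.inl s) : MvPolynomial (Fin n ⊕ Fin n) ℤ))
          (φ := (aeval (fun s => - X s) : MvPolynomial (Fin n ⊕ Fin n) ℤ →ₐ[ℤ] MvPolynomial (Fin n ⊕ Fin n) ℤ)))
          (esymm (Fin n) ℤ ((i : ℕ) + 1))
        simpa [aeval_X] using this
      rw [hc]; exact esymm_neg_eval (MvPolynomial (Fin n ⊕ Fin n) ℤ) n ((i : ℕ) + 1)
        (fun s : Fin n => (X (Sum.inl s) : MvPolynomial (Fin n ⊕ Fin n) ℤ))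
    · simp only [hgdef, Sum.elim_inr, map_mul, map_pow, map_neg, map_one, aeval_X, hFdef, hSdef]
      rw [rename_as_aeval]
      have hc : (aeval (fun s => - X s) : MvPolynomial (Fin n ⊕ Fin n) ℤ →ₐ[ℤ] _)
            ((aeval (fun s : Fin n => (X (Sum.inr s) : MvPolynomial (Fin n ⊕ Fin n) ℤ)))
              (esymm (Fin n) ℤ ((j : ℕ) + 1)))
          = aeval (fun s : Fin n =>
              - (X (Sum.inr s) : MvPolynomial (Fin n ⊕ Fin n) ℤ)) (esymm (Fin n) ℤ ((j : ℕ) + 1)) := by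
        have := AlgHom.congr_fun (comp_aeval
          (f := fun s : Fin n => (X (Sum.inr s) : MvPolynomial (Fin n ⊕ Fin n) ℤ))
          (φ := (aeval (fun s => - X s) : MvPolynomial (Fin n ⊕ Fin n) ℤ →ₐ[ℤ] MvPolynomial (Fin n ⊕ Fin n) ℤ)))
          (esymm (Fin n) ℤ ((j : ℕ) + 1))
        simpa [aeval_X] using this
      rw [hc]; exact esymm_neg_eval (MvPolynomial (Fin n ⊕ Fin n) ℤ) n ((j : ℕ) + 1)
        (fun s : Fin n => (X (Sum.inr s) : MvPolynomial (Fin n ⊕ Fin n) ℤ))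
  have step3 : aeval (fun s => aeval F (g s)) p = S (aeval F p) := by
    have h := AlgHom.congr_fun (comp_aeval (f := F) (φ := S)) p
    simp only [AlgHom.coe_comp, Function.comp_apply] at h
    have hfe : (fun i => S (F i)) = fun s => aeval F (g s) := funext hSF
    rw [h, hfe]
  have step4 : S (aeval F p) = aeval F p := by
    rw [hp]
    have h0 : S ((∏ i : Fin n, ∏ j : Fin n,
          (Polynomial.C ((X (Sum.inl i) * X (Sum.inr j) : MvPolynomial (Fin n ⊕ Fin n) ℤ)) *
            Polynomial.X + 1)).coeff n)
        = ((∏ i : Fin n, ∏ j : Fin n,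
          (Polynomial.C ((X (Sum.inl i) * X (Sum.inr j) : MvPolynomial (Fin n ⊕ Fin n) ℤ)) *
            Polynomial.X + 1)).map S.toRingHom).coeff n := (Polynomial.coeff_map _ _).symm
    rw [h0]
    congr 1
    rw [Polynomial.map_prod]
    apply Finset.prod_congr rfl
    intro i _
    rw [Polynomial.map_prod]
    apply Finset.prod_congr rfl
    intro j _
    simp only [Polynomial.map_add, Polynomial.map_mul, Polynomial.map_C, Polynomial.map_X,
      Polynomial.map_one]
    congr 2
    simp only [AlgHom.toRingHom_eq_coe, RingHom.coe_coe, hSdef, map_mul, aeval_X]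
    rw [← Polynomial.C_mul, ← Polynomial.C_mul, neg_mul_neg]
  rw [step1, step3, step4]

/-- In a special λ-ring `A` with opposite operations `σ^r`, one has
`λ^n(xy) = P_n(σ¹(x),…,σⁿ(x), σ¹(y),…,σⁿ(y))`, where `P_n` is the universal polynomial
given by the coefficient of `tⁿ` in `∏_{i,j≤N} (1 + ξ_i x_j t)` written in the elementary
symmetric polynomials of the `ξ`'s and of the `x`'s (`N ≥ n`).

The λ-ring structure `lam`, its opposite `sig` (characterized by `σ_t(a)·λ_{−t}(a) = 1`),
and the universal polynomials `P r` (for specialness of multiplication) and `Pc m r`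
(for specialness of composition), with their defining properties, are hypothesized. -/
theorem special_lambda_of_product_in_terms_of_sigma
    (A : Type*) [CommRing A] (lam sig : ℕ → A → A)
    (hl0 : ∀ a : A, lam 0 a = 1) (hl1 : ∀ a : A, lam 1 a = a)
    (hladd : ∀ (r : ℕ) (a b : A),
      lam r (a + b) = ∑ p ∈ Finset.HasAntidiagonal.antidiagonal r, lam p.1 a * lam p.2 b)
    (hsig : ∀ a : A,
      (PowerSeries.mk fun r => sig r a) * (PowerSeries.mk fun r => (-1 : A) ^ r * lam r a) = 1)
    (P : (r : ℕ) → MvPolynomial (Fin r ⊕ Fin r) ℤ)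
    (hP : ∀ (r N : ℕ), r ≤ N →
      aeval (Sum.elim
          (fun i : Fin r => rename Sum.inl (esymm (Fin N) ℤ (i + 1)))
          (fun j : Fin r => rename Sum.inr (esymm (Fin N) ℤ (j + 1)))) (P r)
        = (∏ i : Fin N, ∏ j : Fin N,
            (Polynomial.C ((X (Sum.inl i) * X (Sum.inr j) : MvPolynomial (Fin N ⊕ Fin N) ℤ)) *
              Polynomial.X + 1)).coeff r)
    (Pc : (m r : ℕ) → MvPolynomial (Fin (m * r)) ℤ)
    (hPc : ∀ (m r N : ℕ), m * r ≤ N →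
      aeval (fun i : Fin (m * r) => esymm (Fin N) ℤ (i + 1)) (Pc m r)
        = (∏ S ∈ powersetCard r (univ : Finset (Fin N)),
            (Polynomial.C ((∏ i ∈ S, X i : MvPolynomial (Fin N) ℤ)) *
              Polynomial.X + 1)).coeff m)
    (hspecial_mul : ∀ (x y : A) (r : ℕ),
      lam r (x * y) = eval₂ (Int.castRingHom A)
        (Sum.elim (fun i : Fin r => lam (i + 1) x) (fun j : Fin r => lam (j + 1) y)) (P r))
    (hspecial_comp : ∀ (x : A) (m r : ℕ),
      lam m (lam r x) = eval₂ (Int.castRingHom A)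
        (fun i : Fin (m * r) => lam (i + 1) x) (Pc m r)) :
    ∀ (x y : A) (n : ℕ),
      lam n (x * y) = eval₂ (Int.castRingHom A)
        (Sum.elim (fun i : Fin n => sig (i + 1) x) (fun j : Fin n => sig (j + 1) y)) (P n) := by
  intro x y n
  have hs := sig_eq_aux A lam sig hl0 hladd hsig
  have key : ∀ (v : Fin n ⊕ Fin n → A) (q : MvPolynomial (Fin n ⊕ Fin n) ℤ),
      eval₂ (Int.castRingHom A) v q = aeval v q := by
    intro v q
    rw [aeval_def, algebraMap_int_eq]
  set vl : Fin n ⊕ Fin n → A := Sum.elim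
      (fun i : Fin n => lam ((i : ℕ) + 1) (-x)) (fun j : Fin n => lam ((j : ℕ) + 1) (-y))
    with hvl
  set g : Fin n ⊕ Fin n → MvPolynomial (Fin n ⊕ Fin n) ℤ := Sum.elim
      (fun i : Fin n => (-1 : MvPolynomial (Fin n ⊕ Fin n) ℤ) ^ ((i : ℕ) + 1) * X (Sum.inl i))
      (fun j : Fin n => (-1 : MvPolynomial (Fin n ⊕ Fin n) ℤ) ^ ((j : ℕ) + 1) * X (Sum.inr j))
    with hg
  have hsign : aeval g (P n) = P n := P_sign n (P n) (hP n n le_rfl)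
  calc lam n (x * y) = lam n ((-x) * (-y)) := by rw [neg_mul_neg]
    _ = eval₂ (Int.castRingHom A) vl (P n) := hspecial_mul (-x) (-y) n
    _ = aeval vl (P n) := key _ _
    _ = aeval vl (aeval g (P n)) := by rw [hsign]
    _ = aeval (fun s => aeval vl (g s)) (P n) :=
        AlgHom.congr_fun (comp_aeval (f := g)
          (φ := (aeval vl : MvPolynomial (Fin n ⊕ Fin n) ℤ →ₐ[ℤ] A))) (P n)
    _ = aeval (Sum.elim (fun i : Fin n => sig (i + 1) x)
          (fun j : Fin n => sig (j + 1) y)) (P n) := by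
        have hfe : (fun s => aeval vl (g s)) = Sum.elim (fun i : Fin n => sig (i + 1) x)
            (fun j : Fin n => sig (j + 1) y) := by
          funext s
          rcases s with i | j
          · simp only [hg, Sum.elim_inl, map_mul, map_pow, map_neg, map_one, aeval_X, hvl]
            rw [hs ((i : ℕ) + 1) x]
          · simp only [hg, Sum.elim_inr, map_mul, map_pow, map_neg, map_one, aeval_X, hvl]
            rw [hs ((j : ℕ) + 1) y]
        rw [hfe]
    _ = eval₂ (Int.castRingHom A) (Sum.elim (fun i : Fin n => sig (i + 1) x)
          (fun j : Fin n => sig (j + 1) y)) (P n) := (key _ _).symm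
end

section
/- Let A be a special λ-ring with opposite operations σ^r. Then for all x ∈ A, m ≥ 0, and n ≥ 1: if n is odd then σ^m(σ^n(x)) = P_{m,n}(σ^1(x),...,σ^{mn}(x)), and if n is even then λ^m(σ^n(x)) = P_{m,n}(σ^1(x),...,σ^{mn}(x)), where P_{m,n} is the universal polynomial equal to the coefficient of t^m in ∏_{1≤i_1<...<i_n≤N}(1+ξ_{i_1}⋯ξ_{i_n}t) written in elementary symmetric polynomials (N ≥ mn). -/
open Finset MvPolynomial

/-- coefficient of `p(ct)` -/
lemma coeff_comp_C_mul_X {R : Type*} [CommRing R] (p : Polynomial R) (c : R) (m : ℕ) :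
    (p.comp (Polynomial.C c * Polynomial.X)).coeff m = c ^ m * p.coeff m := by
  rw [Polynomial.comp_eq_sum_left]
  rw [Polynomial.coeff_sum]
  rw [Polynomial.sum_def]
  simp only [mul_pow, ← Polynomial.C_pow, Polynomial.coeff_C_mul, Polynomial.coeff_X_pow]
  rw [Finset.sum_eq_single m]
  · by_cases h : m ∈ p.support
    · simp [mul_comm]
    · simp only [Polynomial.notMem_support_iff] at h
      simp [h]
  · intro b _ hb
    simp [hb.symm]
  · intro h
    simp only [Polynomial.notMem_support_iff] at h
    simp [h]

lemma coeff_prod_scale {R ι : Type*} [CommRing R] (c : R) (F : Finset ι) (f : ι → R) (m : ℕ) :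
    (∏ s ∈ F, (Polynomial.C (c * f s) * Polynomial.X + 1)).coeff m
      = c ^ m * (∏ s ∈ F, (Polynomial.C (f s) * Polynomial.X + 1)).coeff m := by
  rw [← coeff_comp_C_mul_X, Polynomial.prod_comp]
  congr 1
  refine Finset.prod_congr rfl fun s _ => ?_
  rw [Polynomial.add_comp, Polynomial.mul_comp, Polynomial.C_comp, Polynomial.X_comp,
    Polynomial.one_comp, ← mul_assoc, ← Polynomial.C_mul, mul_comm (f s) c]

lemma prod_neg_X {R ι : Type*} [CommRing R] (S : Finset ι) (f : ι → R) :
    (∏ i ∈ S, (- f i)) = (-1) ^ S.card * ∏ i ∈ S, f i := by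
  rw [← Finset.prod_const, ← Finset.prod_mul_distrib]
  exact Finset.prod_congr rfl fun i _ => by ring

/-- Weighted-sign identity for the universal composition polynomial. -/
lemma Pc_sign (m n : ℕ) (Q : MvPolynomial (Fin (m * n)) ℤ)
    (hQ : ∀ N, m * n ≤ N →
      aeval (fun i : Fin (m * n) => esymm (Fin N) ℤ (i + 1)) Q
        = (∏ S ∈ powersetCard n (univ : Finset (Fin N)),
            (Polynomial.C ((∏ i ∈ S, X i : MvPolynomial (Fin N) ℤ)) *
              Polynomial.X + 1)).coeff m) :
    aeval (fun i : Fin (m * n) => (-1 : MvPolynomial (Fin (m * n)) ℤ) ^ ((i : ℕ) + 1) * X i) Q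
      = (-1) ^ (m * n) * Q := by
  have h1 := hQ (m * n) le_rfl
  set E : Fin (m * n) → MvPolynomial (Fin (m * n)) ℤ :=
    fun i => esymm (Fin (m * n)) ℤ (i + 1) with hE
  set ψ : MvPolynomial (Fin (m * n)) ℤ →ₐ[ℤ] MvPolynomial (Fin (m * n)) ℤ :=
    aeval (fun j => - X j) with hψ
  have hψe : ∀ k : ℕ, ψ (esymm (Fin (m * n)) ℤ k) = (-1) ^ k * esymm (Fin (m * n)) ℤ k := by
    intro k
    simp only [hψ, esymm, map_sum, map_prod, aeval_X]
    rw [Finset.mul_sum]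
    refine Finset.sum_congr rfl fun T hT => ?_
    rw [prod_neg_X, (Finset.mem_powersetCard.mp hT).2]
  have hψS : ∀ S ∈ powersetCard n (univ : Finset (Fin (m * n))),
      ψ (∏ i ∈ S, X i) = (-1) ^ n * ∏ i ∈ S, X i := by
    intro S hS
    simp only [hψ, map_prod, aeval_X]
    rw [prod_neg_X, (Finset.mem_powersetCard.mp hS).2]
  -- apply ψ to h1
  have h2 := congrArg ψ h1
  rw [comp_aeval_apply] at h2
  have hL : (fun i : Fin (m * n) => ψ (E i))
      = fun i : Fin (m * n) => (-1) ^ ((i : ℕ) + 1) * E i := by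
    funext i; rw [hE]; exact hψe _
  rw [hL] at h2
  -- RHS of h2 : ψ of a coefficient
  have hR : ψ ((∏ S ∈ powersetCard n (univ : Finset (Fin (m * n))),
        (Polynomial.C ((∏ i ∈ S, X i : MvPolynomial (Fin (m * n)) ℤ)) *
          Polynomial.X + 1)).coeff m)
      = (-1) ^ (m * n) * aeval E Q := by
    have step1 : ψ ((∏ S ∈ powersetCard n (univ : Finset (Fin (m * n))),
          (Polynomial.C ((∏ i ∈ S, X i : MvPolynomial (Fin (m * n)) ℤ)) *
            Polynomial.X + 1)).coeff m)
        = ((∏ S ∈ powersetCard n (univ : Finset (Fin (m * n))),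
          (Polynomial.C ((∏ i ∈ S, X i : MvPolynomial (Fin (m * n)) ℤ)) *
            Polynomial.X + 1)).map ψ.toRingHom).coeff m :=
      (Polynomial.coeff_map _ _).symm
    rw [step1, Polynomial.map_prod]
    have step2 : ∀ S ∈ powersetCard n (univ : Finset (Fin (m * n))),
        (Polynomial.C ((∏ i ∈ S, X i : MvPolynomial (Fin (m * n)) ℤ)) *
          Polynomial.X + 1).map ψ.toRingHom
        = Polynomial.C ((-1) ^ n * (∏ i ∈ S, X i : MvPolynomial (Fin (m * n)) ℤ)) *
          Polynomial.X + 1 := by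
      intro S hS
      rw [Polynomial.map_add, Polynomial.map_mul, Polynomial.map_C, Polynomial.map_X,
        Polynomial.map_one]
      rw [AlgHom.toRingHom_eq_coe, RingHom.coe_coe, hψS S hS]
    rw [Finset.prod_congr rfl step2, coeff_prod_scale, ← pow_mul, ← h1, mul_comm n m]
  rw [hR] at h2
  -- rewrite both sides as aeval E of something
  have hf : (fun i : Fin (m * n) => aeval E
        ((-1 : MvPolynomial (Fin (m * n)) ℤ) ^ ((i : ℕ) + 1) * X i))
      = fun i : Fin (m * n) => (-1) ^ ((i : ℕ) + 1) * E i := by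
    funext i
    rw [map_mul, map_pow, map_neg, map_one, aeval_X]
  have h3 : aeval E (aeval
      (fun i : Fin (m * n) => (-1 : MvPolynomial (Fin (m * n)) ℤ) ^ ((i : ℕ) + 1) * X i) Q)
      = aeval E ((-1) ^ (m * n) * Q) := by
    rw [comp_aeval_apply, hf, map_mul, map_pow, map_neg, map_one]
    exact h2
  -- injectivity
  have hinj : ∀ p q : MvPolynomial (Fin (m * n)) ℤ, aeval E p = aeval E q → p = q := by
    intro p q hpq
    refine esymmAlgHom_fin_injective (R := ℤ) (n := m * n) (m := m * n) le_rfl ?_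
    apply Subtype.coe_injective
    show ((esymmAlgHom (Fin (m * n)) ℤ (m * n)) p).val = ((esymmAlgHom (Fin (m * n)) ℤ (m * n)) q).val
    rw [esymmAlgHom_apply, esymmAlgHom_apply]
    exact hpq
  exact hinj _ _ h3

lemma twist_eval {A : Type*} [CommRing A] {d e : ℕ} (Q : MvPolynomial (Fin d) ℤ)
    (h : aeval (fun i : Fin d => (-1 : MvPolynomial (Fin d) ℤ) ^ ((i : ℕ) + 1) * X i) Q
      = (-1) ^ e * Q)
    (b : Fin d → A) :
    aeval (fun i : Fin d => (-1 : A) ^ ((i : ℕ) + 1) * b i) Q = (-1) ^ e * aeval b Q := by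
  have h2 := congrArg (aeval b : MvPolynomial (Fin d) ℤ →ₐ[ℤ] A) h
  rw [comp_aeval_apply] at h2
  have hf : (fun i : Fin d => (aeval b) ((-1 : MvPolynomial (Fin d) ℤ) ^ ((i : ℕ) + 1) * X i))
      = fun i : Fin d => (-1 : A) ^ ((i : ℕ) + 1) * b i := by
    funext i; rw [map_mul, map_pow, map_neg, map_one, aeval_X]
  rw [hf, map_mul, map_pow, map_neg, map_one] at h2
  exact h2

/-- In a special λ-ring `A` with opposite operations `σ^r`: for `n` odd,
`σ^m(σ^n(x)) = P_{m,n}(σ¹(x),…,σ^{mn}(x))`, and for `n` even,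
`λ^m(σ^n(x)) = P_{m,n}(σ¹(x),…,σ^{mn}(x))`, with `P_{m,n}` the universal polynomial
given by the coefficient of `t^m` in `∏_{i_1<…<i_n≤N} (1 + ξ_{i_1}⋯ξ_{i_n} t)` written
in elementary symmetric polynomials (`N ≥ mn`), where `P_n` is the universal polynomial
given by the coefficient of `tⁿ` in `∏_{i,j≤N} (1 + ξ_i x_j t)` written in the elementary
symmetric polynomials of the `ξ`'s and of the `x`'s (`N ≥ n`).

The λ-ring structure `lam`, its opposite `sig` (characterized by `σ_t(a)·λ_{−t}(a) = 1`),
and the universal polynomials `P r` (for specialness of multiplication) and `Pc m r`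
(for specialness of composition), with their defining properties, are hypothesized. -/
theorem special_sigma_composition
    (A : Type*) [CommRing A] (lam sig : ℕ → A → A)
    (hl0 : ∀ a : A, lam 0 a = 1) (hl1 : ∀ a : A, lam 1 a = a)
    (hladd : ∀ (r : ℕ) (a b : A),
      lam r (a + b) = ∑ p ∈ Finset.HasAntidiagonal.antidiagonal r, lam p.1 a * lam p.2 b)
    (hsig : ∀ a : A,
      (PowerSeries.mk fun r => sig r a) * (PowerSeries.mk fun r => (-1 : A) ^ r * lam r a) = 1)
    (P : (r : ℕ) → MvPolynomial (Fin r ⊕ Fin r) ℤ)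
    (hP : ∀ (r N : ℕ), r ≤ N →
      aeval (Sum.elim
          (fun i : Fin r => rename Sum.inl (esymm (Fin N) ℤ (i + 1)))
          (fun j : Fin r => rename Sum.inr (esymm (Fin N) ℤ (j + 1)))) (P r)
        = (∏ i : Fin N, ∏ j : Fin N,
            (Polynomial.C ((X (Sum.inl i) * X (Sum.inr j) : MvPolynomial (Fin N ⊕ Fin N) ℤ)) *
              Polynomial.X + 1)).coeff r)
    (Pc : (m r : ℕ) → MvPolynomial (Fin (m * r)) ℤ)
    (hPc : ∀ (m r N : ℕ), m * r ≤ N →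
      aeval (fun i : Fin (m * r) => esymm (Fin N) ℤ (i + 1)) (Pc m r)
        = (∏ S ∈ powersetCard r (univ : Finset (Fin N)),
            (Polynomial.C ((∏ i ∈ S, X i : MvPolynomial (Fin N) ℤ)) *
              Polynomial.X + 1)).coeff m)
    (hspecial_mul : ∀ (x y : A) (r : ℕ),
      lam r (x * y) = eval₂ (Int.castRingHom A)
        (Sum.elim (fun i : Fin r => lam (i + 1) x) (fun j : Fin r => lam (j + 1) y)) (P r))
    (hspecial_comp : ∀ (x : A) (m r : ℕ),
      lam m (lam r x) = eval₂ (Int.castRingHom A)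
        (fun i : Fin (m * r) => lam (i + 1) x) (Pc m r)) :
    ∀ (x : A) (m n : ℕ), 1 ≤ n →
      (Odd n → sig m (sig n x) = eval₂ (Int.castRingHom A)
        (fun i : Fin (m * n) => sig (i + 1) x) (Pc m n)) ∧
      (Even n → lam m (sig n x) = eval₂ (Int.castRingHom A)
        (fun i : Fin (m * n) => sig (i + 1) x) (Pc m n)) := by
  
  intro x m n hn
  have heval : ∀ (f : Fin (m * n) → A) (p : MvPolynomial (Fin (m * n)) ℤ),
      eval₂ (Int.castRingHom A) f p = aeval f p := by
    intro f p; rw [aeval_def, algebraMap_int_eq]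
  have lam_zero : ∀ r : ℕ, 1 ≤ r → lam r (0 : A) = 0 := by
    intro r
    induction r using Nat.strong_induction_on with
    | _ r IH =>
      intro hr
      have h := hladd r 0 0
      rw [add_zero, Finset.Nat.sum_antidiagonal_eq_sum_range_succ_mk,
        Finset.sum_range_succ, Finset.sum_eq_single 0] at h
      · rw [hl0, Nat.sub_zero, Nat.sub_self, hl0] at h
        linear_combination -h
      · intro b hb hb0
        rw [IH b (Finset.mem_range.mp hb) (Nat.one_le_iff_ne_zero.mpr hb0), zero_mul]
      · intro h0
        exact absurd (Finset.mem_range.mpr (by omega)) h0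
  have sig_eq : ∀ (a : A) (r : ℕ), sig r a = (-1) ^ r * lam r (-a) := by
    intro a r
    have hG : (PowerSeries.mk fun k => (-1 : A) ^ k * lam k (-a)) *
        (PowerSeries.mk fun k => (-1 : A) ^ k * lam k a) = 1 := by
      ext k
      rw [PowerSeries.coeff_mul]
      simp only [PowerSeries.coeff_mk]
      have hterm : ∀ p ∈ Finset.HasAntidiagonal.antidiagonal k,
          (-1 : A) ^ p.1 * lam p.1 (-a) * ((-1 : A) ^ p.2 * lam p.2 a)
            = (-1) ^ k * (lam p.1 (-a) * lam p.2 a) := by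
        intro p hp
        have hpk : p.1 + p.2 = k := Finset.HasAntidiagonal.mem_antidiagonal.mp hp
        rw [← hpk, pow_add]; ring
      rw [Finset.sum_congr rfl hterm, ← Finset.mul_sum, ← hladd k (-a) a, neg_add_cancel]
      rcases Nat.eq_zero_or_pos k with hk | hk
      · subst hk
        rw [hl0]
        simp
      · rw [lam_zero k hk, mul_zero, PowerSeries.coeff_one, if_neg (by omega)]
    have hS := hsig a
    have hEq : (PowerSeries.mk fun k => sig k a)
        = PowerSeries.mk fun k => (-1 : A) ^ k * lam k (-a) := by
      calc (PowerSeries.mk fun k => sig k a)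
          = (PowerSeries.mk fun k => sig k a) *
            ((PowerSeries.mk fun k => (-1 : A) ^ k * lam k (-a)) *
              (PowerSeries.mk fun k => (-1 : A) ^ k * lam k a)) := by rw [hG, mul_one]
        _ = ((PowerSeries.mk fun k => sig k a) *
              (PowerSeries.mk fun k => (-1 : A) ^ k * lam k a)) *
            (PowerSeries.mk fun k => (-1 : A) ^ k * lam k (-a)) := by ring
        _ = PowerSeries.mk fun k => (-1 : A) ^ k * lam k (-a) := by rw [hS, one_mul]
    have hc := congrArg (PowerSeries.coeff r) hEq
    simpa using hc
  have hsign := Pc_sign m n (Pc m n) (fun N h => hPc m n N h)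
  have hcomp : lam m (lam n (-x))
      = aeval (fun i : Fin (m * n) => lam ((i : ℕ) + 1) (-x)) (Pc m n) := by
    rw [hspecial_comp (-x) m n, heval]
  have htw := twist_eval (Pc m n) hsign (fun i : Fin (m * n) => lam ((i : ℕ) + 1) (-x))
  have hRHS : eval₂ (Int.castRingHom A) (fun i : Fin (m * n) => sig (↑i + 1) x) (Pc m n)
      = (-1) ^ (m * n) * lam m (lam n (-x)) := by
    rw [heval]
    have hfn : (fun i : Fin (m * n) => sig (↑i + 1) x)
        = fun i : Fin (m * n) => (-1 : A) ^ ((i : ℕ) + 1) * lam (↑i + 1) (-x) := by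
      funext i; exact sig_eq x (↑i + 1)
    rw [hfn, htw, ← hcomp]
  constructor
  · intro hodd
    rw [hRHS, sig_eq (sig n x) m]
    have h1 : sig n x = - lam n (-x) := by
      rw [sig_eq x n, Odd.neg_one_pow hodd]; ring
    rw [h1, neg_neg]
    have hpow : ((-1 : A)) ^ (m * n) = (-1) ^ m := by
      rw [mul_comm, pow_mul, Odd.neg_one_pow hodd]
    rw [hpow]
  · intro heven
    rw [hRHS]
    have h1 : sig n x = lam n (-x) := by
      rw [sig_eq x n, Even.neg_one_pow heven, one_mul]
    rw [h1]
    have hpow : ((-1 : A)) ^ (m * n) = 1 := by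
      rw [mul_comm, pow_mul, Even.neg_one_pow heven, one_pow]
    rw [hpow, one_mul]
end
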